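/- For b > 0, a ≥ 0 and average bandwidth ū > 0, the maximum over 0 < E ≤ ū/2 of the function E ↦ (E - b)/((1+a)E) - 2(E - b)/((1+a)ū) is (1 - sqrt(2b/ū))²/(1+a), attained at E = sqrt(b·ū/2). -/

import Mathlib

/-- For b > 0, a ≥ 0 and average bandwidth ū ≥ 2b, the maximum over
0 < E ≤ ū/2 of E ↦ (E - b)/((1+a)E) - 2(E - b)/((1+a)ū) is (1 - √(2b/ū))²/(1+a),
attained at E = √(b·ū/2). -/
theorem stmt17 (a b ub : ℝ) (ha : 0 ≤ a) (hb : 0 < b) (hub : 0 < ub) (h2 : 2*b ≤ ub) :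
    IsGreatest {y : ℝ | ∃ E : ℝ, 0 < E ∧ E ≤ ub/2 ∧
        y = (E - b)/((1+a)*E) - 2*(E - b)/((1+a)*ub)}
      ((1 - Real.sqrt (2*b/ub))^2/(1+a)) ∧
    0 < Real.sqrt (b*ub/2) ∧ Real.sqrt (b*ub/2) ≤ ub/2 ∧
    (Real.sqrt (b*ub/2) - b)/((1+a)*Real.sqrt (b*ub/2))
        - 2*(Real.sqrt (b*ub/2) - b)/((1+a)*ub)
      = (1 - Real.sqrt (2*b/ub))^2/(1+a) := by
  have h1a : (0:ℝ) < 1 + a := by linarith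
  set s := Real.sqrt (b*ub/2) with hs_def
  have hs : 0 < s := Real.sqrt_pos.mpr (by positivity)
  have hs2 : s^2 = b*ub/2 := Real.sq_sqrt (by positivity)
  have hsqrt : Real.sqrt (2*b/ub) = 2*s/ub := by
    rw [show 2*b/ub = (2*s/ub)^2 by field_simp; nlinarith [hs2]]
    exact Real.sqrt_sq (by positivity)
  have hsle : s ≤ ub/2 := by nlinarith [hs2, hs]
  have heq : (s - b)/((1+a)*s) - 2*(s - b)/((1+a)*ub)
      = (1 - Real.sqrt (2*b/ub))^2/(1+a) := by
    rw [hsqrt]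
    field_simp
    linear_combination (2*(ub-2*s)) * hs2
  refine ⟨⟨⟨s, hs, hsle, heq.symm⟩, ?_⟩, hs, hsle, heq⟩
  rintro y ⟨E, hE, hEle, rfl⟩
  rw [hsqrt]
  have hid : (1 - 2*s/ub)^2/(1+a) - ((E-b)/((1+a)*E) - 2*(E-b)/((1+a)*ub))
      = 2*(s-E)^2/((1+a)*E*ub) := by
    field_simp
    ring_nf
    linear_combination (4*E-2*ub) * hs2
  have hpos : 0 ≤ 2*(s-E)^2/((1+a)*E*ub) := by positivity
  linarith
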